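/- Let X be an integrable real-valued random variable with E X ≤ 0 and X ≤ d a.s. for a constant d > 0. Define γ := (E X)/(E X - d) and X̃ := (1 - γ)X + γd. Then γ ∈ [0, 1), X ≤ X̃ ≤ d a.s., E X̃ = 0, and Var X̃ ≤ Var X. -/

import Mathlib

open MeasureTheory

theorem stmt_3 {Ω : Type*} [MeasurableSpace Ω] (μ : Measure Ω) [IsProbabilityMeasure μ]
    (X : Ω → ℝ) (hXm : Measurable X) (hX2 : MemLp X 2 μ)
    (d : ℝ) (hd : 0 < d) (hmean : ∫ ω, X ω ∂μ ≤ 0) (hbd : ∀ᵐ ω ∂μ, X ω ≤ d)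
    (γ : ℝ) (hγ : γ = (∫ ω, X ω ∂μ) / ((∫ ω, X ω ∂μ) - d))
    (Xt : Ω → ℝ) (hXt : ∀ ω, Xt ω = (1 - γ) * X ω + γ * d) :
    0 ≤ γ ∧ γ < 1 ∧ (∀ᵐ ω ∂μ, X ω ≤ Xt ω ∧ Xt ω ≤ d) ∧ (∫ ω, Xt ω ∂μ) = 0 ∧
      ProbabilityTheory.variance Xt μ ≤ ProbabilityTheory.variance X μ := by
  set m : ℝ := ∫ ω, X ω ∂μ with hm
  have hmd : m - d < 0 := by linarith
  have hne : m - d ≠ 0 := ne_of_lt hmd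
  have hγd : γ * (m - d) = m := by rw [hγ]; field_simp
  have hγ0 : 0 ≤ γ := by
    rcases lt_or_ge γ 0 with h | h
    · nlinarith
    · exact h
  have hγ1 : γ < 1 := by nlinarith
  have hXint : Integrable X μ := hX2.integrable one_le_two
  have hXtfun : Xt = fun ω => (1 - γ) * X ω + γ * d := funext hXt
  have hXtint : Integrable Xt μ := by
    rw [hXtfun]; exact (hXint.const_mul _).add (integrable_const _)
  have hEXt : (∫ ω, Xt ω ∂μ) = 0 := by
    have : (∫ ω, Xt ω ∂μ) = (1 - γ) * m + γ * d := by
      rw [hXtfun, integral_add (hXint.const_mul _) (integrable_const _),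
        integral_const_mul, integral_const]
      simp [hm]
    rw [this]; nlinarith
  have hγdm : γ * d = -(1 - γ) * m := by nlinarith
  have hXt2 : MemLp Xt 2 μ := by
    rw [hXtfun]; exact (hX2.const_mul _).add (memLp_const _)
  refine ⟨hγ0, hγ1, ?_, hEXt, ?_⟩
  · filter_upwards [hbd] with ω h
    constructor
    · rw [hXt]; nlinarith
    · rw [hXt]; nlinarith
  · have hptwise : ∀ ω, Xt ω = (1 - γ) * (X ω - m) := by
      intro ω; rw [hXt]; nlinarith
    have hvXt : ProbabilityTheory.variance Xt μ = ∫ ω, (Xt ω) ^ 2 ∂μ :=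
      ProbabilityTheory.variance_of_integral_eq_zero hXt2.aemeasurable hEXt
    have hvX : ProbabilityTheory.variance X μ = ∫ ω, (X ω - m) ^ 2 ∂μ := by
      rw [ProbabilityTheory.variance_eq_integral hX2.aemeasurable]
    have hInt : ∫ ω, (Xt ω) ^ 2 ∂μ = (1 - γ) ^ 2 * ∫ ω, (X ω - m) ^ 2 ∂μ := by
      rw [← integral_const_mul]
      congr 1; ext ω; rw [hptwise ω]; ring
    have hVnn : 0 ≤ ∫ ω, (X ω - m) ^ 2 ∂μ := by
      rw [← hvX]; exact ProbabilityTheory.variance_nonneg X μ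
    rw [hvXt, hvX, hInt]
    have h1 : (1 - γ) ^ 2 ≤ 1 := by nlinarith
    calc (1 - γ) ^ 2 * ∫ ω, (X ω - m) ^ 2 ∂μ ≤ 1 * ∫ ω, (X ω - m) ^ 2 ∂μ :=
          mul_le_mul_of_nonneg_right h1 hVnn
      _ = _ := one_mul _
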